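/- Let q > 1 be real, and let f : q^ℤ → ℂ have absolutely convergent q-Mellin transform M_q f(p) = ∑_{n∈ℤ} f(q^n) q^{np} on the strip u < Re(p) < v. Then for any ε in that strip and any x = q^m ∈ q^ℤ, f(x) = (log q)/(2πi) ∫_{ε − iπ/log q}^{ε + iπ/log q} M_q f(p) x^{−p} dp. -/

import Mathlib

open intervalIntegral in
private lemma stmt11_integral_exp_mul_complex {a b : ℝ} {c : ℂ} (hc : c ≠ 0) :
    (∫ x in a..b, Complex.exp (c * x)) = (Complex.exp (c * b) - Complex.exp (c * a)) / c :=
  integral_exp_mul_complex hc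

open Complex in
/-- q-Mellin inversion formula: if the q-Mellin transform
`M_q f(p) = ∑_{n∈ℤ} f(q^n) q^{np}` of `f : q^ℤ → ℂ` converges absolutely on the strip
`u < Re p < v`, then for any `ε` in `(u,v)` and any `x = q^m ∈ q^ℤ`,
`f(x) = (log q)/(2πi) ∫_{ε-iπ/log q}^{ε+iπ/log q} M_q f(p) x^{-p} dp`. -/
theorem stmt11 (q : ℝ) (hq : 1 < q) (f : ℝ → ℂ) (u v : ℝ)
    (hconv : ∀ p : ℂ, u < p.re → p.re < v →
      Summable (fun n : ℤ => ‖f (q ^ n) * (q : ℂ) ^ ((n : ℂ) * p)‖))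
    (ε : ℝ) (hε1 : u < ε) (hε2 : ε < v) (m : ℤ) :
    f (q ^ m) = (Real.log q : ℂ) / (2 * (Real.pi : ℂ) * Complex.I) *
      (Complex.I * ∫ t in (-(Real.pi / Real.log q))..(Real.pi / Real.log q),
        (∑' n : ℤ, f (q ^ n) * (q : ℂ) ^ ((n : ℂ) * ((ε : ℂ) + (t : ℂ) * Complex.I))) *
          (q : ℂ) ^ (-(m : ℂ) * ((ε : ℂ) + (t : ℂ) * Complex.I))) := by
  have hq0 : (0:ℝ) < q := lt_trans one_pos hq
  have hqc0 : (q:ℂ) ≠ 0 := by exact_mod_cast hq0.ne'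
  have hL : 0 < Real.log q := Real.log_pos hq
  set L : ℝ := Real.log q with hLdef
  have hlogc : Complex.log (q:ℂ) = (L:ℂ) := (Complex.ofReal_log hq0.le).symm
  set T : ℝ := Real.pi / L with hTdef
  have hT : 0 < T := div_pos Real.pi_pos hL
  -- key pointwise identity
  have key : ∀ (n : ℤ) (t : ℝ),
      f (q ^ n) * (q : ℂ) ^ ((n : ℂ) * ((ε : ℂ) + (t : ℂ) * Complex.I)) *
        (q : ℂ) ^ (-(m : ℂ) * ((ε : ℂ) + (t : ℂ) * Complex.I))
      = f (q ^ n) * Complex.exp (((n:ℂ) - m) * (ε:ℂ) * L) *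
          Complex.exp ((((n:ℂ) - m) * L * Complex.I) * (t:ℂ)) := by
    intro n t
    rw [mul_assoc, ← Complex.cpow_add _ _ hqc0, Complex.cpow_def_of_ne_zero hqc0, hlogc,
      mul_assoc (f _), ← Complex.exp_add]
    ring_nf
  -- the functions as continuous maps
  have contF : ∀ n : ℤ, Continuous (fun t : ℝ =>
      f (q ^ n) * (q : ℂ) ^ ((n : ℂ) * ((ε : ℂ) + (t : ℂ) * Complex.I)) *
        (q : ℂ) ^ (-(m : ℂ) * ((ε : ℂ) + (t : ℂ) * Complex.I))) := by
    intro n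
    have hc : Continuous (fun t : ℝ => (ε : ℂ) + (t : ℂ) * Complex.I) :=
      continuous_const.add (Complex.continuous_ofReal.mul continuous_const)
    exact ((continuous_const.mul ((continuous_const.mul hc).const_cpow (Or.inl hqc0)))).mul
      ((continuous_const.mul hc).const_cpow (Or.inl hqc0))
  set F : ℤ → C(ℝ, ℂ) := fun n => ⟨_, contF n⟩ with hFdef
  -- norm of each term is constant in t
  have hnorm : ∀ (n : ℤ) (t : ℝ), ‖F n t‖ = ‖f (q ^ n) * (q:ℂ) ^ ((n:ℂ) * (ε:ℂ))‖ * q ^ (-(m:ℝ) * ε) := by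
    intro n t
    simp only [hFdef, ContinuousMap.coe_mk, norm_mul,
      Complex.norm_cpow_eq_rpow_re_of_pos hq0]
    congr 2
    · congr 1
      simp [Complex.mul_re]
    · simp [Complex.mul_re]
  have hsum0 : Summable (fun n : ℤ => ‖f (q ^ n) * (q:ℂ) ^ ((n:ℂ) * (ε:ℂ))‖ * q ^ (-(m:ℝ) * ε)) := by
    apply Summable.mul_right
    simpa using hconv (ε:ℂ) (by simpa using hε1) (by simpa using hε2)
  have hsum : Summable (fun n : ℤ =>
      ‖(F n).restrict (⟨Set.uIcc (-T) T, isCompact_uIcc⟩ : TopologicalSpace.Compacts ℝ)‖) := by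
    have : Nonempty (Set.uIcc (-T) T) := Set.nonempty_uIcc.to_subtype
    apply hsum0.of_nonneg_of_le (fun n => norm_nonneg _)
    intro n
    refine (ContinuousMap.norm_le _ (by positivity)).mpr ?_
    rintro ⟨x, hx⟩
    simp only [ContinuousMap.restrict_apply]
    exact le_of_eq (hnorm n x)
  -- interchange sum and integral
  have interchange : (∫ t in (-T)..T, ∑' n : ℤ, F n t) = ∑' n : ℤ, ∫ t in (-T)..T, F n t :=
    (intervalIntegral.tsum_intervalIntegral_eq_of_summable_norm hsum).symm
  -- compute each integral
  have hint : ∀ n : ℤ, (∫ t in (-T)..T, F n t) = if n = m then f (q ^ m) * (2 * T) else 0 := by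
    intro n
    have hFn : (fun t : ℝ => F n t) = fun t : ℝ => (f (q ^ n) * Complex.exp (((n:ℂ) - m) * (ε:ℂ) * L)) *
        Complex.exp ((((n:ℂ) - m) * L * Complex.I) * (t:ℂ)) := by
      funext t
      simpa [hFdef, mul_assoc] using key n t
    rw [show (∫ t in (-T)..T, F n t) = ∫ t in (-T)..T,
        (f (q ^ n) * Complex.exp (((n:ℂ) - m) * (ε:ℂ) * L)) *
          Complex.exp ((((n:ℂ) - m) * L * Complex.I) * (t:ℂ)) from by rw [← hFn],
      intervalIntegral.integral_const_mul]
    have hTL : (T : ℂ) * (L : ℂ) = (Real.pi : ℂ) := by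
      rw [hTdef]
      push_cast
      rw [div_mul_cancel₀]
      exact_mod_cast hL.ne'
    by_cases hnm : n = m
    · subst hnm
      rw [if_pos rfl]
      simp only [sub_self, zero_mul, Complex.exp_zero, mul_one,
        intervalIntegral.integral_const, sub_neg_eq_add, Complex.real_smul, mul_one]
      push_cast
      ring
    · rw [if_neg hnm]
      have hk0 : ((n:ℂ) - m) ≠ 0 := by
        simpa [sub_eq_zero] using fun h => hnm (by exact_mod_cast h)
      have hc0 : ((n:ℂ) - m) * L * Complex.I ≠ 0 := by
        refine mul_ne_zero (mul_ne_zero hk0 ?_) Complex.I_ne_zero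
        exact_mod_cast hL.ne'
      rw [stmt11_integral_exp_mul_complex hc0]
      have e1 : ((n:ℂ) - m) * L * Complex.I * ((T:ℝ):ℂ) = ((n:ℂ) - m) * Real.pi * Complex.I := by
        linear_combination (((n:ℂ) - m) * Complex.I) * hTL
      have e2 : ((n:ℂ) - m) * L * Complex.I * (((-T):ℝ):ℂ) = -(((n:ℂ) - m) * Real.pi * Complex.I) := by
        push_cast
        linear_combination (-((n:ℂ) - m) * Complex.I) * hTL
      rw [e1, e2]
      have h2A : Complex.exp (2 * (((n:ℂ) - m) * Real.pi * Complex.I)) = 1 := by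
        have h := Complex.exp_int_mul_two_pi_mul_I (n - m)
        rw [show ((n - m : ℤ) : ℂ) * (2 * Real.pi * Complex.I) =
            2 * (((n:ℂ) - m) * Real.pi * Complex.I) from by push_cast; ring] at h
        exact h
      have h3 : Complex.exp (((n:ℂ) - m) * Real.pi * Complex.I) =
          Complex.exp (-(((n:ℂ) - m) * Real.pi * Complex.I)) := by
        have h4 := Complex.exp_add (-(((n:ℂ) - m) * Real.pi * Complex.I))
          (2 * (((n:ℂ) - m) * Real.pi * Complex.I))
        rw [show -(((n:ℂ) - m) * Real.pi * Complex.I) + 2 * (((n:ℂ) - m) * Real.pi * Complex.I)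
            = ((n:ℂ) - m) * Real.pi * Complex.I from by ring, h2A, mul_one] at h4
        exact h4
      rw [h3, sub_self, zero_div, mul_zero]
  -- assemble
  have hτ : (∑' n : ℤ, ∫ t in (-T)..T, F n t) = f (q ^ m) * (2 * T) := by
    simp only [hint]
    exact tsum_ite_eq m _
  have hInt : (∫ t in (-T)..T,
      (∑' n : ℤ, f (q ^ n) * (q : ℂ) ^ ((n : ℂ) * ((ε : ℂ) + (t : ℂ) * Complex.I))) *
        (q : ℂ) ^ (-(m : ℂ) * ((ε : ℂ) + (t : ℂ) * Complex.I))) = f (q ^ m) * (2 * T) := by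
    rw [← hτ, ← interchange]
    apply intervalIntegral.integral_congr
    intro t _
    exact tsum_mul_right.symm
  rw [hInt, hTdef]
  have hπ : (Real.pi : ℂ) ≠ 0 := by exact_mod_cast Real.pi_ne_zero
  have hLc : (L : ℂ) ≠ 0 := by exact_mod_cast hL.ne'
  push_cast
  field_simp
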